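/- Suppose ∫_V [f(x(v),v) − c₂·p(v)] dρ(v) ≥ C and there exists a constant r ≥ 0 such that, with the surrogate outcome ũ(q) := u*(q) + r·f*(q) and surrogate utility Ũ(v) := ⟨ũ(x(v)), v⟩ − (c₁ + r·c₂)·p(v): (i) Ũ is differentiable on the interior V̊ of V with ∇Ũ(v) = ũ(x(v)) for every v ∈ V̊; (ii) Ũ(v') − Ũ(v) ≤ ⟨ũ(x(v')), v' − v⟩ for all v, v' ∈ V; and (iii) if r > 0 then the ex-ante constraint is binding under truthful reporting. Then (x,p) is incentive compatible. -/

import Mathlib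

open MeasureTheory Set

/-- Incentive compatibility of the interim rule pair `(x, p)` for a player with ex-ante
constraint level `C`: truthful reporting satisfies the ex-ante constraint, and any (measurable,
kernel-like) report strategy `s` whose ex-ante utility and constraint value exist either yields
no more utility than truth-telling or violates the ex-ante constraint. -/
def IncentiveCompatible {d D : ℕ} (V : Set (EuclideanSpace ℝ (Fin d)))
    (ρ : Measure (EuclideanSpace ℝ (Fin d)))
    (u f : EuclideanSpace ℝ (Fin D) → EuclideanSpace ℝ (Fin d) → ℝ)
    (x : EuclideanSpace ℝ (Fin d) → EuclideanSpace ℝ (Fin D))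
    (p : EuclideanSpace ℝ (Fin d) → ℝ) (c₁ c₂ C : ℝ) : Prop :=
  (∫ v in V, (f (x v) v - c₂ * p v) ∂ρ) ≥ C ∧
  ∀ s : EuclideanSpace ℝ (Fin d) → Measure (EuclideanSpace ℝ (Fin d)),
    Measurable s →
    (∀ v ∈ V, IsProbabilityMeasure (s v)) →
    (∀ v ∈ V, s v Vᶜ = 0) →
    (∀ v ∈ V, IntegrableOn (fun v' => u (x v') v - c₁ * p v') V (s v)) →
    (∀ v ∈ V, IntegrableOn (fun v' => f (x v') v - c₂ * p v') V (s v)) →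
    IntegrableOn (fun v => ∫ v' in V, (u (x v') v - c₁ * p v') ∂(s v)) V ρ →
    IntegrableOn (fun v => ∫ v' in V, (f (x v') v - c₂ * p v') ∂(s v)) V ρ →
    ((∫ v in V, (∫ v' in V, (u (x v') v - c₁ * p v') ∂(s v)) ∂ρ) ≤
        (∫ v in V, (u (x v) v - c₁ * p v) ∂ρ) ∨
      (∫ v in V, (∫ v' in V, (f (x v') v - c₂ * p v') ∂(s v)) ∂ρ) < C)

open scoped RealInnerProductSpace

private lemma my_integral_const_mul {α : Type*} [MeasurableSpace α] (μ : Measure α)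
    (r : ℝ) (g : α → ℝ) : ∫ a, r * g a ∂μ = r * ∫ a, g a ∂μ := by
  simpa [smul_eq_mul] using integral_smul (μ := μ) r g

/-- The surrogate outcome `ũ(q) = u*(q) + r·f*(q)`. -/
noncomputable def surrogateOutcome {d D : ℕ}
    (ustar fstar : EuclideanSpace ℝ (Fin D) → EuclideanSpace ℝ (Fin d)) (r : ℝ)
    (q : EuclideanSpace ℝ (Fin D)) : EuclideanSpace ℝ (Fin d) :=
  ustar q + r • fstar q

/-- The surrogate utility `Ũ(v) = ⟨ũ(x(v)), v⟩ − (c₁ + r·c₂)·p(v)`. -/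
noncomputable def surrogateUtility {d D : ℕ}
    (ustar fstar : EuclideanSpace ℝ (Fin D) → EuclideanSpace ℝ (Fin d))
    (x : EuclideanSpace ℝ (Fin d) → EuclideanSpace ℝ (Fin D))
    (p : EuclideanSpace ℝ (Fin d) → ℝ) (c₁ c₂ r : ℝ)
    (v : EuclideanSpace ℝ (Fin d)) : ℝ :=
  ⟪surrogateOutcome ustar fstar r (x v), v⟫ - (c₁ + r * c₂) * p v

/-- Sufficiency direction of Theorem 3 (ic-iff). -/
theorem incentiveCompatible_of_surrogate {d D : ℕ}
    (V : Set (EuclideanSpace ℝ (Fin d))) (Q : Set (EuclideanSpace ℝ (Fin D)))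
    (hVc : IsCompact V) (hQc : IsCompact Q)
    (ρ : Measure (EuclideanSpace ℝ (Fin d))) [IsProbabilityMeasure ρ] (hρV : ρ Vᶜ = 0)
    (u f : EuclideanSpace ℝ (Fin D) → EuclideanSpace ℝ (Fin d) → ℝ)
    (x : EuclideanSpace ℝ (Fin d) → EuclideanSpace ℝ (Fin D))
    (p : EuclideanSpace ℝ (Fin d) → ℝ)
    (hu : ContinuousOn (fun qv : EuclideanSpace ℝ (Fin D) × EuclideanSpace ℝ (Fin d) =>
      u qv.1 qv.2) (Q ×ˢ V))
    (hf : ContinuousOn (fun qv : EuclideanSpace ℝ (Fin D) × EuclideanSpace ℝ (Fin d) =>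
      f qv.1 qv.2) (Q ×ˢ V))
    (hx : ContinuousOn x V) (hxQ : MapsTo x V Q) (hp : ContinuousOn p V)
    (c₁ c₂ : ℝ) (hc₁ : c₁ = 0 ∨ c₁ = 1) (hc₂ : c₂ = 0 ∨ c₂ = 1) (C : ℝ)
    (hbdry : ρ (frontier V) = 0)
    (hpdiff : ∀ v ∈ interior V, DifferentiableAt ℝ p v)
    (uhat fhat : EuclideanSpace ℝ (Fin d) → EuclideanSpace ℝ (Fin d))
    (huhat : ∀ v ∈ interior V,
      HasGradientAt (fun v' => u (x v') v - c₁ * p v') (uhat v) v)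
    (hfhat : ∀ v ∈ interior V,
      HasGradientAt (fun v' => f (x v') v - c₂ * p v') (fhat v) v)
    (ustar fstar : EuclideanSpace ℝ (Fin D) → EuclideanSpace ℝ (Fin d))
    (hustarc : ContinuousOn ustar Q) (hfstarc : ContinuousOn fstar Q)
    (hulin : ∀ q ∈ Q, ∀ v ∈ V, u q v = ⟪ustar q, v⟫)
    (hflin : ∀ q ∈ Q, ∀ v ∈ V, f q v = ⟪fstar q, v⟫)
    (hustardiff : ∀ v ∈ interior V, DifferentiableAt ℝ (fun w => ustar (x w)) v)
    (hfstardiff : ∀ v ∈ interior V, DifferentiableAt ℝ (fun w => fstar (x w)) v)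
    (hconn : IsConnected V)
    (hdense : ∀ E : Set (EuclideanSpace ℝ (Fin d)), E ⊆ V → ρ E = 1 → V ⊆ closure E)
    (hfne : ∃ E : Set (EuclideanSpace ℝ (Fin d)), E ⊆ V ∧ 0 < ρ E ∧ ∀ v ∈ E, fhat v ≠ 0)
    (huhatc : ContinuousOn uhat V) (hfhatc : ContinuousOn fhat V)
    (hge : (∫ v in V, (f (x v) v - c₂ * p v) ∂ρ) ≥ C)
    (hr : ∃ r : ℝ, 0 ≤ r ∧
          (∀ v ∈ interior V,
            HasGradientAt (surrogateUtility ustar fstar x p c₁ c₂ r)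
              (surrogateOutcome ustar fstar r (x v)) v) ∧
          (∀ v ∈ V, ∀ v' ∈ V,
            surrogateUtility ustar fstar x p c₁ c₂ r v' -
                surrogateUtility ustar fstar x p c₁ c₂ r v ≤
              ⟪surrogateOutcome ustar fstar r (x v'), v' - v⟫) ∧
          (0 < r → (∫ v in V, (f (x v) v - c₂ * p v) ∂ρ) = C)
) :
    IncentiveCompatible V ρ u f x p c₁ c₂ C := by
  obtain ⟨r, hr0, _hgrad, hineq, hbind⟩ := hr
  refine ⟨hge, ?_⟩
  intro s _hms hsp hsV hsu hsf hIu hIf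
  have hVm : MeasurableSet V := hVc.isClosed.measurableSet
  -- pointwise deviation inequality
  have key : ∀ v ∈ V, ∀ v' ∈ V,
      (u (x v') v - c₁ * p v') + r * (f (x v') v - c₂ * p v') ≤
      (u (x v) v - c₁ * p v) + r * (f (x v) v - c₂ * p v) := by
    intro v hv v' hv'
    have h := hineq v hv v' hv'
    rw [hulin (x v') (hxQ hv') v hv, hflin (x v') (hxQ hv') v hv,
        hulin (x v) (hxQ hv) v hv, hflin (x v) (hxQ hv) v hv]
    simp only [surrogateUtility, surrogateOutcome, inner_add_left,
      real_inner_smul_left, inner_sub_right] at h ⊢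
    nlinarith [h]
  -- inner-integral step
  have step : ∀ v ∈ V,
      (∫ v' in V, (u (x v') v - c₁ * p v') ∂(s v)) +
        r * (∫ v' in V, (f (x v') v - c₂ * p v') ∂(s v)) ≤
      (u (x v) v - c₁ * p v) + r * (f (x v) v - c₂ * p v) := by
    intro v hv
    haveI := hsp v hv
    have hmeas : (s v) V = 1 := by
      have h1 : (s v) V + (s v) Vᶜ = (s v) Set.univ := measure_add_measure_compl hVm
      rw [hsV v hv, measure_univ, add_zero] at h1
      exact h1
    have h1 : (∫ v' in V, (u (x v') v - c₁ * p v') ∂(s v)) +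
        r * (∫ v' in V, (f (x v') v - c₂ * p v') ∂(s v)) =
        ∫ v' in V, ((u (x v') v - c₁ * p v') + r * (f (x v') v - c₂ * p v')) ∂(s v) := by
      rw [integral_add (hsu v hv) ((hsf v hv).const_mul r), my_integral_const_mul]
    rw [h1]
    have h2 : ∫ v' in V, ((u (x v') v - c₁ * p v') + r * (f (x v') v - c₂ * p v')) ∂(s v) ≤
        ∫ v' in V, ((u (x v) v - c₁ * p v) + r * (f (x v) v - c₂ * p v)) ∂(s v) := by
      apply setIntegral_mono_on ((hsu v hv).add ((hsf v hv).const_mul r))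
        (integrableOn_const (by simp [hmeas])) hVm
      intro v' hv'
      exact key v hv v' hv'
    calc _ ≤ _ := h2
      _ = _ := by rw [setIntegral_const]; simp [measureReal_def, hmeas]
  -- integrability of truthful integrands
  have hxc : ContinuousOn (fun v => (x v, v)) V := hx.prodMk continuousOn_id
  have hmapsto : Set.MapsTo (fun v => (x v, v)) V (Q ×ˢ V) := fun v hv => ⟨hxQ hv, hv⟩
  have truthu_int : IntegrableOn (fun v => u (x v) v - c₁ * p v) V ρ :=
    ContinuousOn.integrableOn_compact hVc
      ((hu.comp hxc hmapsto).sub (continuousOn_const.mul hp))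
  have truthf_int : IntegrableOn (fun v => f (x v) v - c₂ * p v) V ρ :=
    ContinuousOn.integrableOn_compact hVc
      ((hf.comp hxc hmapsto).sub (continuousOn_const.mul hp))
  -- outer integration
  have outer : (∫ v in V, (∫ v' in V, (u (x v') v - c₁ * p v') ∂(s v)) ∂ρ) +
      r * (∫ v in V, (∫ v' in V, (f (x v') v - c₂ * p v') ∂(s v)) ∂ρ) ≤
      (∫ v in V, (u (x v) v - c₁ * p v) ∂ρ) +
      r * (∫ v in V, (f (x v) v - c₂ * p v) ∂ρ) := by
    have e1 : (∫ v in V, (∫ v' in V, (u (x v') v - c₁ * p v') ∂(s v)) ∂ρ) +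
        r * (∫ v in V, (∫ v' in V, (f (x v') v - c₂ * p v') ∂(s v)) ∂ρ) =
        ∫ v in V, ((∫ v' in V, (u (x v') v - c₁ * p v') ∂(s v)) +
          r * (∫ v' in V, (f (x v') v - c₂ * p v') ∂(s v))) ∂ρ := by
      rw [integral_add hIu (hIf.const_mul r), my_integral_const_mul]
    have e2 : (∫ v in V, (u (x v) v - c₁ * p v) ∂ρ) +
        r * (∫ v in V, (f (x v) v - c₂ * p v) ∂ρ) =
        ∫ v in V, ((u (x v) v - c₁ * p v) + r * (f (x v) v - c₂ * p v)) ∂ρ := by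
      rw [integral_add truthu_int (truthf_int.const_mul r), my_integral_const_mul]
    rw [e1, e2]
    exact setIntegral_mono_on (hIu.add (hIf.const_mul r))
      (truthu_int.add (truthf_int.const_mul r)) hVm step
  by_cases hFlt : (∫ v in V, (∫ v' in V, (f (x v') v - c₂ * p v') ∂(s v)) ∂ρ) < C
  · exact Or.inr hFlt
  · left
    push_neg at hFlt
    rcases eq_or_lt_of_le hr0 with h0 | hpos
    · rw [← h0] at outer; linarith
    · have hb := hbind hpos
      rw [hb] at outer
      have h3 := mul_le_mul_of_nonneg_left hFlt hr0
      linarith
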